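/- arXiv:1907.04111 — 2 statements merged into one kernel-verified Lean document; each statement's English description precedes it below -/
import Mathlib

section
/- Let (S_n) be a random walk with i.i.d. increments whose law is ν. Suppose G : ℝ → ℝ is a right-continuous bounded function satisfying G(x) = E[G(x + S₁)] for all x ∈ ℝ. Then G(x + a) = G(x) for every x ∈ ℝ and every a in the support of ν; in particular, if the walk is nonarithmetic (the closed subgroup generated by the support of ν is all of ℝ), then G is constant, and if the walk is d-arithmetic (that subgroup equals dℤ), then G is d-periodic. -/
open MeasureTheory Filter Set Topology


lemma meas_of_rc (G : ℝ → ℝ) (hGrc : ∀ x, ContinuousWithinAt G (Ici x) x) :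
    Measurable G := by
  have hmeas : ∀ n : ℕ, Measurable (fun x : ℝ => G (⌈x * (n + 1 : ℝ)⌉ / (n + 1 : ℝ))) := by
    intro n
    exact (measurable_of_countable (fun k : ℤ => G (k / (n + 1 : ℝ)))).comp
      (Int.measurable_ceil.comp (measurable_id.mul_const _))
  apply measurable_of_tendsto_metrizable hmeas
  rw [tendsto_pi_nhds]
  intro x
  have hpos : ∀ n : ℕ, (0:ℝ) < (n + 1 : ℝ) := fun n => by positivity
  have key : Tendsto (fun n : ℕ => (⌈x * (n + 1 : ℝ)⌉ : ℝ) / (n + 1 : ℝ)) atTop (𝓝[Ici x] x) := by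
    rw [tendsto_nhdsWithin_iff]
    constructor
    · apply tendsto_of_tendsto_of_tendsto_of_le_of_le (g := fun _ : ℕ => x)
        (h := fun n : ℕ => x + 1 / (n + 1 : ℝ)) tendsto_const_nhds
      · simpa using (tendsto_one_div_add_atTop_nhds_zero_nat).const_add x
      · intro n
        rw [le_div_iff₀ (hpos n)]
        exact Int.le_ceil _
      · intro n
        rw [div_le_iff₀ (hpos n), add_mul, div_mul_cancel₀ _ (hpos n).ne']
        exact (Int.ceil_lt_add_one _).le
    · filter_upwards with n
      rw [mem_Ici, le_div_iff₀ (hpos n)]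
      exact Int.le_ceil _
  exact (hGrc x).tendsto.comp key


lemma stepA (ν : Measure ℝ) [IsProbabilityMeasure ν] (F : ℝ → ℝ) (L B : ℝ) (hL : 0 ≤ L)
    (hFlip : ∀ u v, |F u - F v| ≤ L * |u - v|) (hB : ∀ z, |F z| ≤ B)
    (hharm : ∀ z, F z = ∫ y, F (z + y) ∂ν)
    (a : ℝ) (ha : ∀ ε > 0, 0 < ν (Ioo (a - ε) (a + ε))) (x : ℝ) :
    F (x + a) ≤ F x := by
  have hFc : Continuous F := by
    apply LipschitzWith.continuous (K := L.toNNReal)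
    apply LipschitzWith.of_dist_le_mul
    intro u v
    rw [Real.dist_eq, Real.dist_eq, Real.coe_toNNReal _ hL]
    exact hFlip u v
  have hInt : ∀ c : ℝ, Integrable (fun y => F (c + y)) ν := by
    intro c
    refine (integrable_const B).mono' ((hFc.comp (continuous_const.add continuous_id)).aestronglyMeasurable) ?_
    filter_upwards with y using by simpa [Real.norm_eq_abs] using hB (c + y)
  set h : ℝ → ℝ := fun z => F (z + a) - F z with hh
  have hhbd : ∀ z, h z ≤ 2 * B := by
    intro z
    have := abs_le.1 (hB (z + a)); have := abs_le.1 (hB z); simp only [hh]; linarith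
  have hbdd : BddAbove (range h) := ⟨2 * B, by rintro _ ⟨z, rfl⟩; exact hhbd z⟩
  set M := ⨆ z, h z with hM
  have hle : ∀ z, h z ≤ M := fun z => le_ciSup hbdd z
  rcases le_or_gt M 0 with hM0 | hM0
  · have := hle x; simp only [hh] at this; linarith
  exfalso
  -- h is harmonic
  have hharmh : ∀ z, h z = ∫ y, h (z + y) ∂ν := by
    intro z
    have e1 : F (z + a) = ∫ y, F (z + y + a) ∂ν := by
      rw [hharm (z + a)]; congr 1; ext y; ring_nf
    have e2 : F z = ∫ y, F (z + y) ∂ν := hharm z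
    have hInt1 : Integrable (fun y => F (z + y + a)) ν := by
      have := hInt (z + a); apply this.congr; filter_upwards with y using by ring_nf
    simp only [hh]
    rw [e1, e2, ← integral_sub hInt1 (hInt z)]
  have hInth : ∀ z, Integrable (fun y => h (z + y)) ν := by
    intro z
    simp only [hh]
    apply Integrable.sub _ (hInt z)
    have := hInt (z + a); apply this.congr; filter_upwards with y using by ring_nf
  set ε := M / 4 with hε
  have hεpos : 0 < ε := by positivity
  set r := M / (4 * (L + 1)) with hr
  have hrpos : 0 < r := by positivity
  set I := Ioo (a - r) (a + r) with hI
  set p := (ν I).toReal with hp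
  have hppos : 0 < p := ENNReal.toReal_pos (ha r hrpos).ne' (measure_ne_top ν I)
  have hp1 : p ≤ 1 := by
    rw [hp]
    exact ENNReal.toReal_le_of_le_ofReal one_pos.le (by simpa using prob_le_one)
  have hpne : p ≠ 0 := hppos.ne'
  clear_value h M ε r I p
  -- transfer step
  have transfer : ∀ η : ℝ, 0 < η → ∀ z, M - η < h z →
      ∃ y ∈ I, M - 2 * η / p < h (z + y) := by
    intro η hη z hz
    by_contra hcon
    push_neg at hcon
    have key : (2 * η / p) * p ≤ ∫ y in I, (M - h (z + y)) ∂ν := by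
      rw [hp] at hcon ⊢
      rw [mul_comm]; show (ν.real I) • (2 * η / (ν I).toReal) ≤ _
      apply setIntegral_ge_of_const_le (hI ▸ measurableSet_Ioo) (measure_ne_top ν I)
      · intro y hy
        have := hcon y hy; linarith
      · exact ((integrable_const M).sub (hInth z)).integrableOn
    have key2 : ∫ y in I, (M - h (z + y)) ∂ν ≤ ∫ y, (M - h (z + y)) ∂ν := by
      apply setIntegral_le_integral ((integrable_const M).sub (hInth z))
      filter_upwards with y
      simp only [Pi.zero_apply, Pi.sub_apply, sub_nonneg]
      exact hle (z + y)
    have key3 : ∫ y, (M - h (z + y)) ∂ν = M - h z := by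
      rw [integral_sub (integrable_const M) (hInth z), integral_const]
      simp [← hharmh z]
    rw [div_mul_cancel₀ _ hppos.ne'] at key
    rw [key3] at key2
    linarith
  -- the chain
  have chain : ∀ n : ℕ, ∀ z, M - ε * (p / 2) ^ n < h z →
      ∃ w, F z + n * (M - ε - L * r) ≤ F w := by
    intro n
    induction n with
    | zero => intro z _; exact ⟨z, by norm_num⟩
    | succ n ih =>
      intro z hz
      obtain ⟨y, hyI, hy⟩ := transfer (ε * (p / 2) ^ (n + 1)) (by positivity) z hz
      rw [hI, mem_Ioo] at hyI
      have heq : 2 * (ε * (p / 2) ^ (n + 1)) / p = ε * (p / 2) ^ n := by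
        field_simp
        ring
      rw [heq] at hy
      obtain ⟨w, hw⟩ := ih (z + y) hy
      refine ⟨w, ?_⟩
      have h1 : |F (z + y) - F (z + a)| ≤ L * r := by
        calc |F (z + y) - F (z + a)| ≤ L * |(z + y) - (z + a)| := hFlip _ _
        _ ≤ L * r := by
            apply mul_le_mul_of_nonneg_left _ hL
            rw [add_sub_add_left_eq_sub, abs_le]
            rcases hyI with ⟨hy1, hy2⟩
            constructor <;> linarith
      have h2 : M - ε < h z := by
        have : ε * (p / 2) ^ (n + 1) ≤ ε := by
          apply mul_le_of_le_one_right hεpos.le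
          apply pow_le_one₀ (by positivity)
          linarith
        linarith
      have h3 := abs_le.1 h1
      simp only [hh] at h2
      push_cast
      nlinarith [hw]
  -- conclude
  obtain ⟨n, hn⟩ := exists_nat_gt (2 * B / (M / 2))
  have hn2 : 2 * B < n * (M / 2) := by
    rw [div_lt_iff₀ (by positivity)] at hn
    linarith
  have hstart : M - ε * (p / 2) ^ n < M := by
    have : (0:ℝ) < ε * (p / 2) ^ n := by positivity
    linarith
  rw [hM, lt_ciSup_iff hbdd] at hstart
  obtain ⟨z₀, hz₀⟩ := hstart
  rw [← hM] at hz₀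
  obtain ⟨w, hw⟩ := chain n z₀ hz₀
  have hLr : L * r ≤ M / 4 := by
    rw [hr, mul_comm, div_mul_eq_mul_div, div_le_div_iff₀ (by positivity) (by norm_num)]
    nlinarith
  have hMhalf : M / 2 ≤ M - ε - L * r := by rw [hε]; linarith
  have : (n:ℝ) * (M / 2) ≤ n * (M - ε - L * r) :=
    mul_le_mul_of_nonneg_left hMhalf (Nat.cast_nonneg n)
  have hFw := abs_le.1 (hB w)
  have hFz := abs_le.1 (hB z₀)
  linarith

lemma stepB (ν : Measure ℝ) [IsProbabilityMeasure ν] (G : ℝ → ℝ)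
    (hGrc : ∀ x, ContinuousWithinAt G (Ici x) x) (C : ℝ) (hGbd : ∀ x, |G x| ≤ C)
    (hharm : ∀ x, G x = ∫ y, G (x + y) ∂ν)
    (a : ℝ) (ha : ∀ ε > 0, 0 < ν (Ioo (a - ε) (a + ε))) (x : ℝ) :
    G (x + a) = G x := by
  have hGm : Measurable G := meas_of_rc G hGrc
  have hC0 : 0 ≤ C := le_trans (abs_nonneg _) (hGbd 0)
  have finIoc : ∀ u v : ℝ, IsFiniteMeasure (volume.restrict (Set.uIoc u v)) := by
    intro u v
    constructor
    rw [Measure.restrict_apply_univ]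
    exact lt_of_le_of_lt (measure_mono Set.uIoc_subset_uIcc) isCompact_uIcc.measure_lt_top
  have finIoc' : ∀ u v : ℝ, IsFiniteMeasure (volume.restrict (Ioc u v)) := by
    intro u v
    constructor
    rw [Measure.restrict_apply_univ, Real.volume_Ioc]
    exact ENNReal.ofReal_lt_top
  have intInt : ∀ u v : ℝ, IntervalIntegrable G volume u v := by
    intro u v
    rw [intervalIntegrable_iff]
    haveI := finIoc u v
    refine (integrable_const C).mono' hGm.aestronglyMeasurable.restrict ?_
    filter_upwards with t using by simpa [Real.norm_eq_abs] using hGbd t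
  set Fd : ℝ → ℝ → ℝ := fun δ z => ∫ v in z..(z + δ), G v with hFd
  have normInt : ∀ u v : ℝ, |∫ t in u..v, G t| ≤ C * |v - u| := by
    intro u v
    rw [← Real.norm_eq_abs]
    exact intervalIntegral.norm_integral_le_of_norm_le_const
      (fun t _ => by simpa [Real.norm_eq_abs] using hGbd t)
  have lip : ∀ δ u v : ℝ, |Fd δ u - Fd δ v| ≤ (2 * C) * |u - v| := by
    intro δ u v
    have h1 := intervalIntegral.integral_add_adjacent_intervals (intInt u v) (intInt v (v + δ))
    have h2 := intervalIntegral.integral_add_adjacent_intervals (intInt u (v + δ)) (intInt (v + δ) (u + δ))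
    have e : Fd δ u - Fd δ v = (∫ t in u..v, G t) + ∫ t in (v + δ)..(u + δ), G t := by
      simp only [hFd]; linarith
    rw [e]
    have n1 := normInt u v
    have n2 := normInt (v + δ) (u + δ)
    have e2 : (u + δ) - (v + δ) = u - v := by ring
    rw [e2] at n2
    calc |(∫ t in u..v, G t) + ∫ t in (v + δ)..(u + δ), G t|
        ≤ |∫ t in u..v, G t| + |∫ t in (v + δ)..(u + δ), G t| := abs_add_le _ _
      _ ≤ (2 * C) * |u - v| := by rw [abs_sub_comm v u] at n1; linarith
  have bdF : ∀ δ z : ℝ, |Fd δ z| ≤ C * |δ| := by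
    intro δ z
    have := normInt z (z + δ)
    simpa using this
  have harmF : ∀ δ : ℝ, 0 < δ → ∀ z : ℝ, Fd δ z = ∫ y, Fd δ (z + y) ∂ν := by
    intro δ hδ z
    have hzδ : z ≤ z + δ := by linarith
    have step1 : ∀ y : ℝ, Fd δ (z + y) = ∫ v in Ioc z (z + δ), G (v + y) := by
      intro y
      have : Fd δ (z + y) = ∫ v in z..(z + δ), G (v + y) := by
        rw [hFd]
        simp only
        rw [intervalIntegral.integral_comp_add_right (fun t => G t) y]
        congr 1
        ring
      rw [this, intervalIntegral.integral_of_le hzδ]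
    haveI := finIoc' z (z + δ)
    have swap : ∫ y, ∫ v in Ioc z (z + δ), G (v + y) ∂volume ∂ν
        = ∫ v in Ioc z (z + δ), ∫ y, G (v + y) ∂ν ∂volume := by
      apply MeasureTheory.integral_integral_swap
      refine (integrable_const C).mono' ?_ ?_
      · exact (hGm.comp (measurable_snd.add measurable_fst)).aestronglyMeasurable
      · filter_upwards with q using by rw [Real.norm_eq_abs]; exact hGbd (q.2 + q.1)
    calc Fd δ z = ∫ v in Ioc z (z + δ), G v := by rw [hFd]; simp only; rw [intervalIntegral.integral_of_le hzδ]
      _ = ∫ v in Ioc z (z + δ), ∫ y, G (v + y) ∂ν := by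
          apply setIntegral_congr_fun measurableSet_Ioc
          intro v _
          exact hharm v
      _ = ∫ y, ∫ v in Ioc z (z + δ), G (v + y) ∂volume ∂ν := swap.symm
      _ = ∫ y, Fd δ (z + y) ∂ν := by
          congr 1; ext y; rw [step1 y]
  -- invariance of the averages
  have invF : ∀ δ : ℝ, 0 < δ → ∀ z : ℝ, Fd δ (z + a) = Fd δ z := by
    intro δ hδ z
    have h1 : Fd δ (z + a) ≤ Fd δ z :=
      stepA ν (Fd δ) (2 * C) (C * |δ|) (by positivity) (lip δ) (bdF δ) (harmF δ hδ) a ha z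
    have h2 : (fun w => -(Fd δ w)) (z + a) ≤ (fun w => -(Fd δ w)) z := by
      apply stepA ν (fun w => -(Fd δ w)) (2 * C) (C * |δ|) (by positivity) _ _ _ a ha z
      · intro u v
        rw [neg_sub_neg, abs_sub_comm]
        exact lip δ u v
      · intro w; rw [abs_neg]; exact bdF δ w
      · intro w
        rw [integral_neg, ← harmF δ hδ w]
    simp only at h2
    linarith
  -- limit
  have limF : ∀ z : ℝ, Tendsto (fun δ => Fd δ z / δ) (𝓝[>] (0:ℝ)) (𝓝 (G z)) := by
    intro z
    rw [Metric.tendsto_nhdsWithin_nhds]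
    intro ε hε
    obtain ⟨δ₀, hδ₀, hδ₀'⟩ := Metric.continuousWithinAt_iff.1 (hGrc z) (ε / 2) (by linarith)
    refine ⟨δ₀, hδ₀, ?_⟩
    intro δ hδmem hδdist
    have hδ : 0 < δ := hδmem
    have hδlt : δ < δ₀ := by
      rw [Real.dist_eq, sub_zero, abs_of_pos hδ] at hδdist; exact hδdist
    have key : |Fd δ z - δ * G z| ≤ (ε / 2) * δ := by
      have e : Fd δ z - δ * G z = ∫ v in z..(z + δ), (G v - G z) := by
        rw [intervalIntegral.integral_sub (intInt z (z + δ)) intervalIntegrable_const,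
          intervalIntegral.integral_const, smul_eq_mul]
        simp only [hFd]
        ring_nf
      rw [e, ← Real.norm_eq_abs]
      have := intervalIntegral.norm_integral_le_of_norm_le_const (a := z) (b := z + δ)
        (C := ε / 2) (f := fun v => G v - G z) ?_
      · calc ‖∫ v in z..(z + δ), (G v - G z)‖ ≤ (ε/2) * |z + δ - z| := this
          _ = (ε/2) * δ := by rw [show z + δ - z = δ by ring, abs_of_pos hδ]
      · intro t ht
        rw [Set.uIoc_of_le (by linarith : z ≤ z + δ)] at ht
        have h1 : t ∈ Ici z := le_of_lt ht.1
        have h2 : dist t z < δ₀ := by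
          rw [Real.dist_eq, abs_of_nonneg (by linarith [ht.1] : (0:ℝ) ≤ t - z)]
          linarith [ht.2]
        have := hδ₀' h1 h2
        rw [Real.dist_eq] at this
        rw [Real.norm_eq_abs]
        linarith
    have hne : δ ≠ 0 := hδ.ne'
    have e3 : Fd δ z / δ - G z = (Fd δ z - δ * G z) / δ := by field_simp
    rw [Real.dist_eq, e3, abs_div, abs_of_pos hδ, div_lt_iff₀ hδ]
    calc |Fd δ z - δ * G z| ≤ (ε/2) * δ := key
      _ < ε * δ := by nlinarith
  -- conclude
  have t1 : Tendsto (fun δ => Fd δ (x + a) / δ) (𝓝[>] (0:ℝ)) (𝓝 (G (x + a))) := limF (x + a)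
  have t2 : Tendsto (fun δ => Fd δ (x + a) / δ) (𝓝[>] (0:ℝ)) (𝓝 (G x)) := by
    apply (limF x).congr'
    filter_upwards [self_mem_nhdsWithin] with δ hδ
    rw [invF δ hδ x]
  exact tendsto_nhds_unique t1 t2

/-- Choquet–Deny type lemma for bounded right-continuous harmonic
functions of a random walk with increment law `ν`. -/
theorem stmt0 (ν : Measure ℝ) [IsProbabilityMeasure ν]
    (G : ℝ → ℝ)
    (hGrc : ∀ x, ContinuousWithinAt G (Ici x) x)
    (hGbd : ∃ C, ∀ x, |G x| ≤ C)
    (hharm : ∀ x, G x = ∫ y, G (x + y) ∂ν) :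
    (∀ a, (∀ ε > 0, 0 < ν (Ioo (a - ε) (a + ε))) → ∀ x, G (x + a) = G x) ∧
    (closure ((AddSubgroup.closure {a : ℝ | ∀ ε > 0, 0 < ν (Ioo (a - ε) (a + ε))} : AddSubgroup ℝ) : Set ℝ)
        = Set.univ → ∃ c, ∀ x, G x = c) ∧
    (∀ d : ℝ, closure ((AddSubgroup.closure {a : ℝ | ∀ ε > 0, 0 < ν (Ioo (a - ε) (a + ε))} : AddSubgroup ℝ) : Set ℝ)
        = ((AddSubgroup.zmultiples d : AddSubgroup ℝ) : Set ℝ) →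
      ∀ x, G (x + d) = G x) := by
  obtain ⟨C, hGbd⟩ := hGbd
  have key : ∀ a, (∀ ε > 0, 0 < ν (Ioo (a - ε) (a + ε))) → ∀ x, G (x + a) = G x :=
    fun a ha x => stepB ν G hGrc C hGbd hharm a ha x
  set S : Set ℝ := {a : ℝ | ∀ ε > 0, 0 < ν (Ioo (a - ε) (a + ε))} with hS
  set P : AddSubgroup ℝ :=
    { carrier := {t : ℝ | ∀ x, G (x + t) = G x}
      zero_mem' := by intro x; rw [add_zero]
      add_mem' := by
        intro s t hs ht x
        have e : x + (s + t) = (x + s) + t := by ring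
        rw [e, ht (x + s), hs x]
      neg_mem' := by
        intro t ht x
        have := ht (x + -t)
        rw [show (x + -t) + t = x by ring] at this
        exact this.symm } with hP
  have hmemP : ∀ t : ℝ, t ∈ P ↔ ∀ x, G (x + t) = G x := fun t => Iff.rfl
  -- limits from the right of periods are periods
  have aux : ∀ (t : ℝ) (u : ℕ → ℝ), (∀ n, u n ∈ P) → (∀ n, t ≤ u n) →
      Tendsto u atTop (𝓝 t) → t ∈ P := by
    intro t u hu hge hlim
    intro x
    have h1 : Tendsto (fun n => x + u n) atTop (𝓝[Ici (x + t)] (x + t)) := by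
      rw [tendsto_nhdsWithin_iff]
      constructor
      · exact tendsto_const_nhds.add hlim
      · filter_upwards with n
        simpa [mem_Ici] using add_le_add_left (hge n) x
    have h2 : Tendsto (fun n => G (x + u n)) atTop (𝓝 (G (x + t))) :=
      ((hGrc (x + t)).tendsto).comp h1
    have h3 : (fun n => G (x + u n)) = fun _ => G x := funext fun n => hu n x
    rw [h3] at h2
    exact tendsto_nhds_unique h2 tendsto_const_nhds
  have hclosed : ∀ t ∈ closure (P : Set ℝ), t ∈ P := by
    intro t ht
    obtain ⟨u, hu, hlim⟩ := mem_closure_iff_seq_limit.1 ht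
    by_cases hc : ∃ᶠ n in atTop, t ≤ u n
    · obtain ⟨φ, hφ, hφ'⟩ := extraction_of_frequently_atTop hc
      exact aux t (u ∘ φ) (fun n => hu (φ n)) hφ' (hlim.comp hφ.tendsto_atTop)
    · rw [not_frequently] at hc
      have hc' : ∀ᶠ n in atTop, u n < t := by filter_upwards [hc] with n hn using lt_of_not_ge hn
      obtain ⟨N, hN⟩ := eventually_atTop.1 hc'
      have hneg : -t ∈ P := by
        apply aux (-t) (fun n => -(u (n + N))) (fun n => neg_mem (hu (n + N)))
          (fun n => by have := hN (n + N) (by omega); linarith)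
        exact (hlim.comp (tendsto_add_atTop_nat N)).neg
      simpa using neg_mem hneg
  have hSP : AddSubgroup.closure S ≤ P := by
    rw [AddSubgroup.closure_le]
    intro a haS
    exact key a haS
  have hclP : closure ((AddSubgroup.closure S : AddSubgroup ℝ) : Set ℝ) ⊆ (P : Set ℝ) := by
    intro t ht
    exact hclosed t (closure_mono hSP ht)
  refine ⟨key, ?_, ?_⟩
  · intro huniv
    refine ⟨G 0, fun x => ?_⟩
    have hx : x ∈ P := hclP (by rw [huniv]; trivial)
    have := hx 0
    rwa [zero_add] at this
  · intro d hd x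
    have hdP : d ∈ P := hclP (by rw [hd]; exact AddSubgroup.mem_zmultiples d)
    exact hdP x
end

section
/- Let λ be a nonnegative measure on ℝ that is absolutely continuous with density G (with G bounded, nonnegative, right-continuous), and let ν be a probability measure on ℝ. If λ = λ ∗ ν (convolution), then for every a in the support of ν and every x ∈ ℝ, G(x + a) = G(x). -/
open MeasureTheory Filter Set Topology ENNReal

lemma measurable_of_rc {G : ℝ → ℝ} (hGrc : ∀ x, ContinuousWithinAt G (Ici x) x) :
    Measurable G := by
  have key : ∀ n : ℕ, Measurable (fun x : ℝ => G ((⌈x * 2 ^ n⌉ : ℤ) / (2 ^ n : ℝ))) := by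
    intro n
    have h1 : Measurable fun x : ℝ => (⌈x * 2 ^ n⌉ : ℤ) := by
      apply Monotone.measurable
      intro a b hab
      exact Int.ceil_le_ceil (mul_le_mul_of_nonneg_right hab (by positivity))
    exact (measurable_from_top (f := fun z : ℤ => G ((z : ℝ) / (2 ^ n : ℝ)))).comp h1
  apply measurable_of_tendsto_metrizable key
  rw [tendsto_pi_nhds]
  intro x
  have hsub : Tendsto (fun n : ℕ => ((⌈x * 2 ^ n⌉ : ℤ) : ℝ) / (2 ^ n : ℝ)) atTop (𝓝[Ici x] x) := by
    apply tendsto_nhdsWithin_of_tendsto_nhds_of_eventually_within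
    · have hup : Tendsto (fun n : ℕ => x + (1 / 2 : ℝ) ^ n) atTop (𝓝 x) := by
        have := tendsto_pow_atTop_nhds_zero_of_lt_one (by norm_num : (0:ℝ) ≤ 1/2) (by norm_num)
        simpa using tendsto_const_nhds.add this
      apply tendsto_of_tendsto_of_tendsto_of_le_of_le tendsto_const_nhds hup
      · intro n
        rw [le_div_iff₀ (by positivity)]
        exact Int.le_ceil _
      · intro n
        rw [div_le_iff₀ (by positivity)]
        have := (Int.ceil_lt_add_one (x * 2 ^ n)).le
        calc ((⌈x * 2 ^ n⌉ : ℤ) : ℝ) ≤ x * 2 ^ n + 1 := this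
          _ = (x + (1/2)^n) * 2 ^ n := by ring_nf; rw [one_div, inv_pow, inv_mul_cancel₀ (by positivity)]; ring
    · filter_upwards with n
      rw [mem_Ici, le_div_iff₀ (by positivity)]
      exact Int.le_ceil _
  exact (hGrc x).tendsto.comp hsub

lemma conv_withDensity (ν : Measure ℝ) [IsProbabilityMeasure ν] {G : ℝ → ℝ}
    (hG : Measurable G) :
    Measure.conv (volume.withDensity fun x => ENNReal.ofReal (G x)) ν
      = volume.withDensity (fun x => ∫⁻ y, ENNReal.ofReal (G (x - y)) ∂ν) := by
  set f : ℝ → ℝ≥0∞ := fun x => ENNReal.ofReal (G x) with hf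
  have hfm : Measurable f := hG.ennreal_ofReal
  ext A hA
  rw [Measure.conv, Measure.map_apply measurable_add hA,
    Measure.prod_apply_symm (measurable_add hA)]
  have h1 : ∀ y : ℝ, (volume.withDensity f) ((fun x => (x, y)) ⁻¹' ((fun p : ℝ × ℝ => p.1 + p.2) ⁻¹' A))
      = ∫⁻ x, A.indicator (fun _ => (1:ℝ≥0∞)) x * f (x - y) ∂volume := by
    intro y
    have hset : ((fun x => (x, y)) ⁻¹' ((fun p : ℝ × ℝ => p.1 + p.2) ⁻¹' A)) = (fun x => x + y) ⁻¹' A := rfl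
    rw [hset, withDensity_apply _ ((measurable_add_const y) hA)]
    rw [← lintegral_indicator ((measurable_add_const y) hA)]
    have := lintegral_add_right_eq_self (μ := volume)
      (fun x => A.indicator (fun _ => (1:ℝ≥0∞)) x * f (x - y)) y
    rw [← this]
    congr 1
    ext x
    by_cases hx : x + y ∈ A <;> simp [indicator, hx, add_sub_cancel_right]
  simp_rw [h1]
  rw [lintegral_lintegral_swap]
  · rw [withDensity_apply _ hA, ← lintegral_indicator hA]
    congr 1
    ext x
    by_cases hx : x ∈ A
    · simp [indicator, hx]; rfl
    · simp [indicator, hx]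
  · apply Measurable.aemeasurable
    apply Measurable.mul
    · exact (measurable_indicator_const_iff 1).mpr hA |>.comp measurable_snd
    · exact (hfm.comp (measurable_snd.sub measurable_fst))

lemma harmonic_of_conv (ν : Measure ℝ) [IsProbabilityMeasure ν] {G : ℝ → ℝ} {C : ℝ}
    (hGrc : ∀ x, ContinuousWithinAt G (Ici x) x)
    (hGnn : ∀ x, 0 ≤ G x) (hGbd : ∀ x, G x ≤ C)
    (hconv : (volume.withDensity fun x => ENNReal.ofReal (G x))
        = Measure.conv (volume.withDensity fun x => ENNReal.ofReal (G x)) ν) :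
    ∀ x, G x = ∫ y, G (x - y) ∂ν := by
  have hG : Measurable G := measurable_of_rc hGrc
  set g : ℝ → ℝ≥0∞ := fun x => ∫⁻ y, ENNReal.ofReal (G (x - y)) ∂ν with hgdef
  have hgm : Measurable g := by
    apply Measurable.lintegral_prod_right'
      (f := fun p : ℝ × ℝ => ENNReal.ofReal (G (p.1 - p.2)))
    exact (hG.comp (measurable_fst.sub measurable_snd)).ennreal_ofReal
  have hae : (fun x => ENNReal.ofReal (G x)) =ᵐ[volume] g := by
    rw [← withDensity_eq_iff_of_sigmaFinite hG.ennreal_ofReal.aemeasurable hgm.aemeasurable]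
    rw [hconv, conv_withDensity ν hG]
  set Φ : ℝ → ℝ := fun x => ∫ y, G (x - y) ∂ν with hΦdef
  have hint : ∀ x : ℝ, Integrable (fun y => G (x - y)) ν := by
    intro x
    refine ⟨(hG.comp (measurable_const.sub measurable_id)).aestronglyMeasurable, ?_⟩
    apply HasFiniteIntegral.mono' (g := fun _ => C) (integrable_const C).2
    filter_upwards with y
    rw [Real.norm_eq_abs, abs_of_nonneg (hGnn _)]
    exact hGbd _
  have hΦg : ∀ x, Φ x = (g x).toReal := by
    intro x
    show (∫ y, G (x - y) ∂ν) = _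
    rw [integral_eq_lintegral_of_nonneg_ae (Filter.Eventually.of_forall fun y => hGnn _)
      (hint x).aestronglyMeasurable]
  have haeΦ : ∀ᵐ x ∂(volume : Measure ℝ), G x = Φ x := by
    filter_upwards [hae] with x hx
    rw [hΦg x, ← hx, ENNReal.toReal_ofReal (hGnn x)]
  have hΦrc : ∀ x, ContinuousWithinAt Φ (Ici x) x := by
    intro x
    have : Tendsto Φ (𝓝[Ici x] x) (𝓝 (Φ x)) := by
      apply tendsto_integral_filter_of_dominated_convergence (fun _ => C)
      · filter_upwards with x' using (hint x').aestronglyMeasurable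
      · filter_upwards with x'
        filter_upwards with y
        rw [Real.norm_eq_abs, abs_of_nonneg (hGnn _)]
        exact hGbd _
      · exact integrable_const C
      · filter_upwards with y
        have hmap : Tendsto (fun x' => x' - y) (𝓝[Ici x] x) (𝓝[Ici (x - y)] (x - y)) := by
          apply tendsto_nhdsWithin_of_tendsto_nhds_of_eventually_within
          · exact (continuous_id.sub continuous_const).continuousAt.tendsto.mono_left
              nhdsWithin_le_nhds
          · filter_upwards [self_mem_nhdsWithin] with z hz
            exact sub_le_sub_right hz y
        exact (hGrc (x - y)).tendsto.comp hmap
    exact this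
  intro x
  have hGt : Tendsto G (𝓝[>] x) (𝓝 (G x)) :=
    (hGrc x).tendsto.mono_left (nhdsWithin_mono x Ioi_subset_Ici_self)
  have hΦt : Tendsto Φ (𝓝[>] x) (𝓝 (Φ x)) :=
    (hΦrc x).tendsto.mono_left (nhdsWithin_mono x Ioi_subset_Ici_self)
  have hfreq : ∃ᶠ z in 𝓝[>] x, G z = Φ z := by
    by_contra hev
    rw [not_frequently] at hev
    obtain ⟨b, hb, hIoo⟩ := mem_nhdsGT_iff_exists_Ioo_subset.mp hev
    have hnull : volume (Ioo x b) = 0 := by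
      apply measure_mono_null (fun z hz => hIoo hz : Ioo x b ⊆ {z | ¬ G z = Φ z})
      exact ae_iff.mp haeΦ
    rw [Real.volume_Ioo] at hnull
    have : b ≤ x := by
      by_contra hbx
      push_neg at hbx
      simp [ENNReal.ofReal_eq_zero] at hnull
      linarith
    exact absurd hb (by simpa using this)
  exact tendsto_nhds_unique_of_frequently_eq hGt hΦt hfreq

lemma key_le (ν : Measure ℝ) [IsProbabilityMeasure ν] {a : ℝ}
    (ha : ∀ ε > 0, 0 < ν (Ioo (a - ε) (a + ε)))
    {h : ℝ → ℝ} {L C : ℝ}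
    (hlip : ∀ u v, |h u - h v| ≤ L * |u - v|)
    (hbd : ∀ x, |h x| ≤ C)
    (hharm : ∀ x, h x = ∫ y, h (x - y) ∂ν) :
    ∀ x, h x ≤ h (x - a) := by
  have hC0 : 0 ≤ C := le_trans (abs_nonneg _) (hbd 0)
  have hL0 : 0 ≤ L := by
    have := hlip 1 0
    simp at this
    nlinarith [abs_nonneg (h 1 - h 0)]
  have hcont : Continuous h := by
    rw [Metric.continuous_iff]
    intro x ε hε
    refine ⟨ε / (L + 1), by positivity, fun u hu => ?_⟩
    rw [Real.dist_eq] at hu ⊢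
    calc |h u - h x| ≤ L * |u - x| := hlip u x
      _ < ε := by
          rcases eq_or_lt_of_le (abs_nonneg (u - x)) with hz | hz
          · rw [← hz]; simpa using hε
          · calc L * |u - x| ≤ (L + 1) * |u - x| := by nlinarith
              _ < (L + 1) * (ε / (L + 1)) := by
                  apply mul_lt_mul_of_pos_left hu (by positivity)
              _ = ε := by field_simp
  set k : ℝ → ℝ := fun x => h x - h (x - a) with hkdef
  have hkbd : ∀ x, |k x| ≤ 2 * C := fun x =>
    (abs_sub _ _).trans (by linarith [hbd x, hbd (x - a)])
  have hkcont : Continuous k := hcont.sub (hcont.comp (continuous_id.sub continuous_const))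
  have hint : ∀ (f : ℝ → ℝ), Continuous f → (∀ x, |f x| ≤ 2 * C) →
      ∀ x, Integrable (fun y => f (x - y)) ν := by
    intro f hf hfb x
    refine ⟨((hf.comp (continuous_const.sub continuous_id)).measurable).aestronglyMeasurable, ?_⟩
    apply HasFiniteIntegral.mono' (g := fun _ => 2 * C) (integrable_const (2 * C)).2
    filter_upwards with y
    exact hfb _
  have hkint : ∀ x, Integrable (fun y => k (x - y)) ν := hint k hkcont hkbd
  have hkharm : ∀ x, k x = ∫ y, k (x - y) ∂ν := by
    intro x
    have h1 := hharm x
    have h2 := hharm (x - a)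
    have : (fun y => h (x - a - y)) = fun y => h ((x - y) - a) := by
      ext y; ring_nf
    rw [this] at h2
    rw [hkdef]
    simp only
    rw [h1, h2, ← integral_sub (hint h hcont (fun x => by linarith [hbd x, abs_nonneg (h x)]) x)]
    exact hint (fun z => h (z - a)) (hcont.comp (continuous_id.sub continuous_const))
      (fun z => by have := hbd (z - a); linarith [abs_nonneg (h (z-a))]) x
  have hbdd : BddAbove (range k) := by
    refine ⟨2 * C, ?_⟩
    rintro _ ⟨x, rfl⟩
    exact (le_abs_self _).trans (hkbd x)
  set m : ℝ := ⨆ x, k x with hmdef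
  have hkm : ∀ x, k x ≤ m := fun x => le_ciSup hbdd x
  suffices hm : m ≤ 0 by
    intro x
    have := (hkm x).trans hm
    simpa [hkdef] using this
  by_contra hmpos
  push_neg at hmpos
  -- choose N
  obtain ⟨N, hN⟩ := exists_nat_gt ((4 * C + 1) / m)
  have hNm : 4 * C + 1 < N * m := by
    rw [div_lt_iff₀ hmpos] at hN
    linarith
  have hN0 : 0 < (N : ℝ) := by nlinarith
  set ρ : ℝ := 1 / (2 * N * (L + 1)) with hρdef
  have hρ0 : 0 < ρ := by positivity
  have hNLρ : N * (L * ρ) ≤ 1 / 2 := by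
    have heq : (N : ℝ) * (L * ρ) = (N * L) / (2 * N * (L + 1)) := by rw [hρdef]; ring
    rw [heq, div_le_div_iff₀ (by positivity) (by norm_num)]
    nlinarith
  set B : Set ℝ := Ioo (a - ρ) (a + ρ) with hBdef
  have hBmeas : MeasurableSet B := measurableSet_Ioo
  set p : ℝ := (ν B).toReal with hpdef
  have hp0 : 0 < p := ENNReal.toReal_pos (ha ρ hρ0).ne' (measure_ne_top ν B)
  have hp1 : p ≤ 1 := by
    rw [hpdef]
    have := prob_le_one (μ := ν) (s := B)
    calc (ν B).toReal ≤ (1 : ℝ≥0∞).toReal := ENNReal.toReal_mono one_ne_top this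
      _ = 1 := by simp
  -- propagation
  have prop : ∀ x δ, 0 < δ → m - δ ≤ k x → ∃ y ∈ B, m - 2 * δ / p ≤ k (x - y) := by
    intro x δ hδ hkx
    by_contra hcon
    push_neg at hcon
    have hsplit : k x = (∫ y in B, k (x - y) ∂ν) + ∫ y in Bᶜ, k (x - y) ∂ν := by
      rw [integral_add_compl hBmeas (hkint x)] at *
      exact hkharm x
    have hB1 : (∫ y in B, k (x - y) ∂ν) ≤ p * (m - 2 * δ / p) := by
      calc (∫ y in B, k (x - y) ∂ν) ≤ ∫ y in B, (m - 2 * δ / p) ∂ν := by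
            apply setIntegral_mono_on (hkint x).integrableOn
              ((integrableOn_const_iff).mpr (Or.inr (measure_lt_top ν B))) hBmeas
            exact fun y hy => (hcon y hy).le
        _ = p * (m - 2 * δ / p) := by rw [setIntegral_const]; rw [smul_eq_mul]; rfl
    have hB2 : (∫ y in Bᶜ, k (x - y) ∂ν) ≤ (1 - p) * m := by
      have hc : (ν Bᶜ).toReal = 1 - p := by
        rw [measure_compl hBmeas (measure_ne_top ν B)]
        rw [measure_univ]
        rw [ENNReal.toReal_sub_of_le (prob_le_one) one_ne_top]
        simp [hpdef]
      calc (∫ y in Bᶜ, k (x - y) ∂ν) ≤ ∫ y in Bᶜ, m ∂ν := by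
            apply setIntegral_mono_on (hkint x).integrableOn
              ((integrableOn_const_iff).mpr (Or.inr (measure_lt_top ν Bᶜ))) hBmeas.compl
            exact fun y _ => hkm _
        _ = (1 - p) * m := by rw [setIntegral_const, smul_eq_mul]; show (ν Bᶜ).toReal * m = _; rw [hc]
    have : k x ≤ m - 2 * δ := by
      have hfs : p * (m - 2 * δ / p) = p * m - 2 * δ := by
        field_simp
      nlinarith [hsplit, hB1, hB2]
    linarith
  -- choose δ₀
  set S : ℝ := ∑ j ∈ Finset.range N, (2 / p) ^ j with hSdef
  have hS0 : 0 ≤ S := Finset.sum_nonneg fun j _ => by positivity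
  set δ₀ : ℝ := 1 / (2 * (S + 1)) with hδ₀def
  have hδ₀0 : 0 < δ₀ := by rw [hδ₀def]; apply div_pos one_pos; linarith
  have hδ₀S : δ₀ * S ≤ 1 / 2 := by
    rw [hδ₀def, one_div, inv_mul_le_iff₀ (by linarith)]
    nlinarith
  obtain ⟨x₀, hx₀⟩ : ∃ x₀, m - δ₀ < k x₀ := by
    apply exists_lt_of_lt_ciSup
    linarith
  -- induction
  have main : ∀ n : ℕ, ∃ z, m - δ₀ * (2 / p) ^ n ≤ k z ∧
      h z ≤ h x₀ - n * (m - L * ρ) + δ₀ * ∑ j ∈ Finset.range n, (2 / p) ^ j := by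
    intro n
    induction n with
    | zero => exact ⟨x₀, by simpa using hx₀.le, by simp⟩
    | succ n ih =>
      obtain ⟨z, hkz, hhz⟩ := ih
      obtain ⟨y, hyB, hky⟩ := prop z (δ₀ * (2 / p) ^ n) (mul_pos hδ₀0 (pow_pos (div_pos two_pos hp0) n)) hkz
      refine ⟨z - y, ?_, ?_⟩
      · have : 2 * (δ₀ * (2 / p) ^ n) / p = δ₀ * (2 / p) ^ (n + 1) := by
          rw [pow_succ]
          field_simp
        rw [← this]
        exact hky
      · obtain ⟨hy1, hy2⟩ := hyB
        have hya : |a - y| ≤ ρ := abs_le.mpr ⟨by linarith, by linarith⟩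
        have hstep : h (z - y) ≤ h (z - a) + L * ρ := by
          have := hlip (z - y) (z - a)
          have habs : |(z - y) - (z - a)| = |a - y| := by
            rw [show (z - y) - (z - a) = a - y by ring]
          rw [habs] at this
          have : h (z - y) - h (z - a) ≤ L * |a - y| :=
            (le_abs_self _).trans this
          nlinarith
        have hza : h (z - a) = h z - k z := by rw [hkdef]; ring
        rw [Finset.sum_range_succ]
        push_cast
        have hza2 : h (z - a) ≤ h z - m + δ₀ * (2 / p) ^ n := by
          rw [hza]; linarith
        have hexp : ((n : ℝ) + 1) * (m - L * ρ) = (n : ℝ) * (m - L * ρ) + (m - L * ρ) := by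
          ring
        linarith [hexp, hstep, hza2, hhz]
  obtain ⟨z, _, hz⟩ := main N
  have h1 : -C ≤ h z := neg_le_of_abs_le (hbd z)
  have h2 : h x₀ ≤ C := le_of_abs_le (hbd x₀)
  have hsum : δ₀ * S ≤ 1 / 2 := hδ₀S
  have hfin : (N : ℝ) * (m - L * ρ) = N * m - N * (L * ρ) := by ring
  linarith [hz, h1, h2, hsum, hNLρ, hfin, hNm, hC0]

/-- Choquet–Deny lemma. If the measure `λ` with bounded, nonnegative,
right-continuous density `G` w.r.t. Lebesgue measure satisfies `λ = λ ∗ ν` for a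
probability measure `ν`, then `G` is periodic with every period in the support of `ν`. -/
theorem stmt2 (ν : Measure ℝ) [IsProbabilityMeasure ν] (G : ℝ → ℝ)
    (hGrc : ∀ x, ContinuousWithinAt G (Ici x) x)
    (hGnn : ∀ x, 0 ≤ G x)
    (hGbd : ∃ C, ∀ x, G x ≤ C)
    (hconv : (volume.withDensity fun x => ENNReal.ofReal (G x))
        = Measure.conv (volume.withDensity fun x => ENNReal.ofReal (G x)) ν) :
    ∀ a, (∀ ε > 0, 0 < ν (Ioo (a - ε) (a + ε))) → ∀ x, G (x + a) = G x := by
  obtain ⟨C, hC⟩ := hGbd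
  have hC0 : 0 ≤ C := (hGnn 0).trans (hC 0)
  have hG : Measurable G := measurable_of_rc hGrc
  have heqH : ∀ x, G x = ∫ y, G (x - y) ∂ν := harmonic_of_conv ν hGrc hGnn hC hconv
  intro a ha x
  set H : ℝ → ℝ → ℝ := fun t z => (∫ u in z..(z + t), G u) / t with hHdef
  have hGii : ∀ b c : ℝ, IntervalIntegrable G volume b c := by
    intro b c
    rw [intervalIntegrable_iff]
    refine ⟨hG.aestronglyMeasurable.restrict, ?_⟩
    apply HasFiniteIntegral.mono' (g := fun _ => C)
    · refine ((integrableOn_const_iff).mpr (Or.inr ?_)).2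
      rw [Set.uIoc]
      rw [Real.volume_Ioc]
      exact ENNReal.ofReal_lt_top
    · filter_upwards with u
      rw [Real.norm_eq_abs, abs_of_nonneg (hGnn u)]
      exact hC u
  have hnorm : ∀ b c : ℝ, ‖∫ u in b..c, G u‖ ≤ C * |c - b| := by
    intro b c
    apply intervalIntegral.norm_integral_le_of_norm_le_const
    intro u _
    rw [Real.norm_eq_abs, abs_of_nonneg (hGnn u)]
    exact hC u
  have hHbd : ∀ t : ℝ, 0 < t → ∀ z, |H t z| ≤ C := by
    intro t ht z
    rw [hHdef]
    simp only
    rw [abs_div, abs_of_pos ht]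
    rw [div_le_iff₀ ht]
    have := hnorm z (z + t)
    rw [show z + t - z = t by ring, abs_of_pos ht] at this
    rw [← Real.norm_eq_abs]
    linarith
  have hHlip : ∀ t : ℝ, 0 < t → ∀ u v, |H t u - H t v| ≤ (2 * C / t) * |u - v| := by
    intro t ht u v
    have hsplit1 : (∫ w in u..(u + t), G w) = (∫ w in u..v, G w) + ∫ w in v..(u + t), G w :=
      (intervalIntegral.integral_add_adjacent_intervals (hGii u v) (hGii v (u + t))).symm
    have hsplit2 : (∫ w in v..(v + t), G w) = (∫ w in v..(u + t), G w) + ∫ w in (u + t)..(v + t), G w :=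
      (intervalIntegral.integral_add_adjacent_intervals (hGii v (u + t)) (hGii (u + t) (v + t))).symm
    have hdiff : H t u - H t v = ((∫ w in u..v, G w) - ∫ w in (u + t)..(v + t), G w) / t := by
      rw [hHdef]
      simp only
      rw [hsplit1, hsplit2]
      ring
    rw [hdiff, abs_div, abs_of_pos ht, div_le_iff₀ ht]
    have h1 := hnorm u v
    have h2 := hnorm (u + t) (v + t)
    rw [show v + t - (u + t) = v - u by ring] at h2
    have habs : |v - u| = |u - v| := abs_sub_comm v u
    rw [habs] at h1 h2
    calc |(∫ w in u..v, G w) - ∫ w in (u + t)..(v + t), G w|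
        ≤ ‖∫ w in u..v, G w‖ + ‖∫ w in (u + t)..(v + t), G w‖ := abs_sub _ _
      _ ≤ 2 * (C * |u - v|) := by simp only [Real.norm_eq_abs] at h1 h2 ⊢; linarith
      _ = 2 * C / t * |u - v| * t := by field_simp
  have hHharm : ∀ t : ℝ, 0 < t → ∀ z, H t z = ∫ y, H t (z - y) ∂ν := by
    intro t ht z
    have hzt : z ≤ z + t := by linarith
    haveI : IsFiniteMeasure (volume.restrict (Ioc z (z + t))) := by
      constructor
      rw [Measure.restrict_apply_univ, Real.volume_Ioc]
      exact ENNReal.ofReal_lt_top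
    have hswap : (∫ u in Ioc z (z + t), (∫ y, G (u - y) ∂ν) ∂volume)
        = ∫ y, (∫ u in Ioc z (z + t), G (u - y) ∂volume) ∂ν := by
      apply integral_integral_swap
      constructor
      · exact ((hG.comp (measurable_fst.sub measurable_snd)).aestronglyMeasurable)
      · apply HasFiniteIntegral.mono' (g := fun _ => C)
        · exact (integrable_const C).2
        · filter_upwards with q
          simp only [Function.uncurry, Real.norm_eq_abs]
          rw [abs_of_nonneg (hGnn _)]
          exact hC _
    have step1 : (∫ u in z..(z + t), G u) = ∫ u in z..(z + t), (∫ y, G (u - y) ∂ν) := by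
      apply intervalIntegral.integral_congr
      intro u _
      exact heqH u
    rw [hHdef]
    simp only
    rw [step1, intervalIntegral.integral_of_le hzt, hswap]
    rw [← integral_div]
    congr 1
    ext y
    rw [← intervalIntegral.integral_of_le hzt]
    rw [intervalIntegral.integral_comp_sub_right (fun u => G u) y]
    rw [show z + t - y = (z - y) + t by ring]
  have hHper : ∀ t : ℝ, 0 < t → ∀ z, H t (z - a) = H t z := by
    intro t ht
    have hle := key_le ν ha (hHlip t ht) (hHbd t ht) (hHharm t ht)
    have hge := key_le ν ha (h := fun z => -(H t z)) (L := 2 * C / t) (C := C)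
      (fun u v => by rw [show -(H t u) - -(H t v) = -(H t u - H t v) by ring, abs_neg]
                     exact hHlip t ht u v)
      (fun z => by rw [abs_neg]; exact hHbd t ht z)
      (fun z => by show -(H t z) = ∫ y, -(H t (z - y)) ∂ν; rw [integral_neg]; exact congrArg Neg.neg (hHharm t ht z))
    intro z
    have h2 : H t (z - a) ≤ H t z := by have := hge z; simpa using this
    exact le_antisymm h2 (hle z)
  have hHlim : ∀ z, Tendsto (fun t => H t z) (𝓝[>] (0:ℝ)) (𝓝 (G z)) := by
    intro z
    rw [Metric.tendsto_nhdsWithin_nhds]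
    intro ε hε
    obtain ⟨δ, hδ0, hδ⟩ := Metric.continuousWithinAt_iff.mp (hGrc z) (ε / 2) (by linarith)
    refine ⟨δ, hδ0, fun {t} htIoi htδ => ?_⟩
    have ht : 0 < t := htIoi
    rw [Real.dist_eq, sub_zero, abs_of_pos ht] at htδ
    have hsub : (∫ u in z..(z + t), (G u - G z)) = (∫ u in z..(z + t), G u) - t * G z := by
      rw [intervalIntegral.integral_sub (hGii _ _) intervalIntegrable_const,
        intervalIntegral.integral_const, smul_eq_mul]
      ring_nf
    have hbnd : ‖∫ u in z..(z + t), (G u - G z)‖ ≤ (ε / 2) * |z + t - z| := by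
      apply intervalIntegral.norm_integral_le_of_norm_le_const
      intro u hu
      rw [Set.uIoc_of_le (by linarith : z ≤ z + t)] at hu
      have hu1 : z < u := hu.1
      have hu2 : u ≤ z + t := hu.2
      have : dist (G u) (G z) < ε / 2 := by
        apply hδ (mem_Ici.mpr hu1.le)
        rw [Real.dist_eq]
        rw [abs_of_nonneg (by linarith : (0:ℝ) ≤ u - z)]
        linarith
      rw [Real.norm_eq_abs, ← Real.dist_eq]
      exact this.le
    rw [Real.dist_eq]
    have hHGz : H t z - G z = (∫ u in z..(z + t), (G u - G z)) / t := by
      rw [hsub, hHdef]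
      simp only
      field_simp
    rw [hHGz, abs_div, abs_of_pos ht, div_lt_iff₀ ht]
    rw [show z + t - z = t by ring, abs_of_pos ht] at hbnd
    rw [← Real.norm_eq_abs]
    calc ‖∫ u in z..(z + t), (G u - G z)‖ ≤ ε / 2 * t := hbnd
      _ < ε * t := by nlinarith
  have e1 : Tendsto (fun t => H t (x + a)) (𝓝[>] (0:ℝ)) (𝓝 (G (x + a))) := hHlim (x + a)
  have e2 : Tendsto (fun t => H t (x + a)) (𝓝[>] (0:ℝ)) (𝓝 (G x)) := by
    apply (hHlim x).congr'
    filter_upwards [self_mem_nhdsWithin] with t ht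
    have := hHper t ht (x + a)
    rw [show x + a - a = x by ring] at this
    exact this
  exact tendsto_nhds_unique e1 e2
end
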